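/- Let (G, T) be a connected graft with T ≠ ∅, let r ∈ V(G), and let K₀ be the connected component containing r of the subgraph of G induced on L(0) = {x ∈ V(G) : dist(r, x) ≤ 0}. If T ⊆ V(K₀), then the subgraph of G induced on L(0) is connected (and hence equals K₀). -/

import Mathlib

open SimpleGraph
open scoped Classical

variable {V : Type*} [Fintype V] [DecidableEq V]

/-- `(G, T)` is a graft: every connected component of `G` contains an even number
of vertices of `T`. -/
def IsGraft (G : SimpleGraph V) (T : Set V) : Prop :=
  ∀ v : V, Even {u ∈ T | G.Reachable v u}.ncard

/-- `F` is a join of `(G, T)`: `F ⊆ E(G)` and every vertex `v` is incident to an odd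
number of edges of `F` exactly when `v ∈ T`. -/
def IsJoin (G : SimpleGraph V) (T : Set V) (F : Set (Sym2 V)) : Prop :=
  F ⊆ G.edgeSet ∧ ∀ v : V, (Odd {e ∈ F | v ∈ e}.ncard ↔ v ∈ T)

/-- `F` is a minimum join of `(G, T)`. -/
def IsMinJoin (G : SimpleGraph V) (T : Set V) (F : Set (Sym2 V)) : Prop :=
  IsJoin G T F ∧ ∀ F' : Set (Sym2 V), IsJoin G T F' → F.ncard ≤ F'.ncard

/-- `F`-weight of an edge: `-1` if the edge is in `F`, `+1` otherwise. -/
noncomputable def ew (F : Set (Sym2 V)) (e : Sym2 V) : ℤ :=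
  if e ∈ F then -1 else 1

/-- `F`-weight of a walk: the sum of the `F`-weights of its edges. -/
noncomputable def walkWeight {G : SimpleGraph V} {x y : V} (F : Set (Sym2 V))
    (p : G.Walk x y) : ℤ :=
  (p.edges.map (ew F)).sum

/-- `F`-distance between `x` and `y`: the minimum `F`-weight of a path between them. -/
noncomputable def distF (G : SimpleGraph V) (F : Set (Sym2 V)) (x y : V) : ℤ :=
  sInf {w : ℤ | ∃ p : G.Walk x y, p.IsPath ∧ walkWeight F p = w}

/-- `F` covers the vertex `v`. -/
def Covers (F : Set (Sym2 V)) (v : V) : Prop := ∃ e ∈ F, v ∈ e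

/-- The edge set `F` is nonempty and determines a connected subgraph. -/
def ConnectedEdgeSet (F : Set (Sym2 V)) : Prop :=
  F.Nonempty ∧ ∀ x y : V, Covers F x → Covers F y →
    (SimpleGraph.fromEdgeSet F).Reachable x y

/-- `e` has exactly one endpoint in `K`. -/
def Crossing (K : Set V) (e : Sym2 V) : Prop :=
  ∃ x y : V, e = s(x, y) ∧ x ∈ K ∧ y ∉ K

/-- The subgraph of `G` induced on `S` (viewed as a graph on the same vertex type). -/
def sgRestrict (G : SimpleGraph V) (S : Set V) : SimpleGraph V where
  Adj x y := G.Adj x y ∧ x ∈ S ∧ y ∈ S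
  symm := ⟨fun x y h => ⟨h.1.symm, h.2.2, h.2.1⟩⟩
  loopless := ⟨fun x h => G.loopless.irrefl x h.1⟩

/-- The subgraph of `G` induced on `S`, with all edges having both endpoints in `L` deleted. -/
def sgRestrictDel (G : SimpleGraph V) (S L : Set V) : SimpleGraph V where
  Adj x y := G.Adj x y ∧ x ∈ S ∧ y ∈ S ∧ ¬(x ∈ L ∧ y ∈ L)
  symm := ⟨fun x y h => ⟨h.1.symm, h.2.2.1, h.2.1, fun hc => h.2.2.2 ⟨hc.2, hc.1⟩⟩⟩
  loopless := ⟨fun x h => G.loopless.irrefl x h.1⟩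

/-- `K` is (the vertex set of) a connected component of the subgraph of `G` induced on `S`. -/
def IsCompOn (G : SimpleGraph V) (S K : Set V) : Prop :=
  ∃ v ∈ S, K = {u | (sgRestrict G S).Reachable v u}

/-- `ν(G, T)`: the number of edges of a minimum join of `(G, T)`. -/
noncomputable def nu (G : SimpleGraph V) (T : Set V) : ℕ :=
  sInf {n : ℕ | ∃ F : Set (Sym2 V), IsJoin G T F ∧ F.ncard = n}

/-- `dist_{(G, T)}(x, y)`: the `F`-distance between `x` and `y` for a minimum join `F`
of `(G, T)` (a value independent of the choice of the minimum join `F`). -/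
noncomputable def graftDist (G : SimpleGraph V) (T : Set V) (x y : V) : ℤ :=
  sInf {d : ℤ | ∃ F : Set (Sym2 V), IsMinJoin G T F ∧ distF G F x y = d}


open scoped symmDiff
set_option linter.unusedSectionVars false
set_option linter.unusedTactic false
set_option linter.unusedVariables false

namespace StmtAux


variable {G : SimpleGraph V} {T : Set V} {F : Set (Sym2 V)}

lemma ew_le_one (e : Sym2 V) : ew F e ≤ 1 := by
  unfold ew; split <;> omega

lemma neg_one_le_ew (e : Sym2 V) : -1 ≤ ew F e := by
  unfold ew; split <;> omega

lemma walkWeight_nil {x : V} : walkWeight F (Walk.nil : G.Walk x x) = 0 := rfl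

lemma walkWeight_cons {x y z : V} (h : G.Adj x y) (p : G.Walk y z) :
    walkWeight F (Walk.cons h p) = ew F s(x, y) + walkWeight F p := by
  simp [walkWeight, Walk.edges_cons]

lemma walkWeight_append {x y z : V} (p : G.Walk x y) (q : G.Walk y z) :
    walkWeight F (p.append q) = walkWeight F p + walkWeight F q := by
  simp [walkWeight, Walk.edges_append]

lemma walkWeight_reverse {x y : V} (p : G.Walk x y) :
    walkWeight F p.reverse = walkWeight F p := by
  simp [walkWeight, Walk.edges_reverse, List.map_reverse, List.sum_reverse]

lemma neg_length_le_walkWeight {x y : V} (p : G.Walk x y) :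
    -(p.edges.length : ℤ) ≤ walkWeight F p := by
  unfold walkWeight
  induction p.edges with
  | nil => simp
  | cons e l ih =>
      simp only [List.map_cons, List.sum_cons, List.length_cons]
      have := neg_one_le_ew (F := F) e
      push_cast
      omega

lemma walkWeight_nonneg_of_disjoint {x y : V} (p : G.Walk x y)
    (h : ∀ e ∈ p.edges, e ∉ F) : 0 ≤ walkWeight F p := by
  induction p with
  | nil => simp [walkWeight]
  | @cons a b c h' q ih =>
      rw [walkWeight_cons]
      have h1 : s(a, b) ∉ F := h _ (by simp)
      have h2 : 0 ≤ walkWeight F q := ih (fun e he => h e (by simp [he]))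
      have h3 : ew F s(a, b) = 1 := if_neg h1
      omega

lemma neg_card_le_walkWeight {x y : V} (p : G.Walk x y) (hp : p.IsPath) :
    -(Fintype.card (Sym2 V) : ℤ) ≤ walkWeight F p := by
  refine le_trans ?_ (neg_length_le_walkWeight p)
  have := List.Nodup.length_le_card hp.isTrail.edges_nodup
  omega

lemma distSet_nonempty (hc : G.Connected) (x y : V) :
    {w : ℤ | ∃ p : G.Walk x y, p.IsPath ∧ walkWeight F p = w}.Nonempty := by
  obtain ⟨p⟩ := hc.preconnected x y
  exact ⟨walkWeight F p.bypass, p.bypass, p.bypass_isPath, rfl⟩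

lemma distSet_bddBelow (x y : V) :
    BddBelow {w : ℤ | ∃ p : G.Walk x y, p.IsPath ∧ walkWeight F p = w} := by
  refine ⟨-(Fintype.card (Sym2 V) : ℤ), ?_⟩
  rintro w ⟨p, hp, rfl⟩
  exact neg_card_le_walkWeight p hp

lemma distF_le_path {x y : V} (p : G.Walk x y) (hp : p.IsPath) :
    distF G F x y ≤ walkWeight F p :=
  csInf_le (distSet_bddBelow x y) ⟨p, hp, rfl⟩

lemma exists_min_path (hc : G.Connected) (x y : V) :
    ∃ p : G.Walk x y, p.IsPath ∧ walkWeight F p = distF G F x y := by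
  have := Int.csInf_mem (distSet_nonempty (F := F) hc x y) (distSet_bddBelow x y)
  obtain ⟨p, hp, hw⟩ := this
  exact ⟨p, hp, hw⟩

lemma neg_card_le_distF (hc : G.Connected) (x y : V) :
    -(Fintype.card (Sym2 V) : ℤ) ≤ distF G F x y := by
  obtain ⟨p, hp, hw⟩ := exists_min_path (F := F) hc x y
  rw [← hw]; exact neg_card_le_walkWeight p hp

lemma distF_self (x : V) : distF G F x x = 0 := by
  have : {w : ℤ | ∃ p : G.Walk x x, p.IsPath ∧ walkWeight F p = w} = {0} := by
    ext w
    constructor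
    · rintro ⟨p, hp, rfl⟩
      rw [Walk.isPath_iff_eq_nil.mp hp]
      rfl
    · rintro rfl
      exact ⟨Walk.nil, by simp, rfl⟩
  rw [distF, this, csInf_singleton]



lemma countP_toFinset {α : Type*} [DecidableEq α] {l : List α} (hl : l.Nodup)
    (P : α → Prop) [DecidablePred P] :
    (l.toFinset.filter P).card = l.countP (fun e => decide (P e)) := by
  induction l with
  | nil => simp
  | cons a l ih =>
    rw [List.nodup_cons] at hl
    simp only [List.toFinset_cons, List.countP_cons]
    rw [Finset.filter_insert]
    by_cases hP : P a
    · rw [if_pos hP, Finset.card_insert_of_notMem (by simp [hl.1]), ih hl.2]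
      simp [hP]
    · rw [if_neg hP, ih hl.2]
      simp [hP]

lemma card_symmDiff' {α : Type*} [DecidableEq α] (A B : Finset α) :
    (A ∆ B).card + 2 * (A ∩ B).card = A.card + B.card := by
  have h1 : A ∆ B = (A \ B) ∪ (B \ A) := rfl
  have h2 : Disjoint (A \ B) (B \ A) :=
    Finset.disjoint_left.mpr (by intro a ha hb; simp at ha hb; tauto)
  have h3 := Finset.card_sdiff_add_card_inter A B
  have h4 := Finset.card_sdiff_add_card_inter B A
  rw [h1, Finset.card_union_of_disjoint h2, Finset.inter_comm B A] at *
  omega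

lemma filter_symmDiff' {α : Type*} [DecidableEq α] (A B : Finset α) (P : α → Prop)
    [DecidablePred P] : (A ∆ B).filter P = (A.filter P) ∆ (B.filter P) := by
  ext a
  simp only [Finset.mem_filter, Finset.mem_symmDiff]
  tauto

lemma odd_filter_symmDiff {α : Type*} [DecidableEq α] (A B : Finset α) (P : α → Prop)
    [DecidablePred P] :
    Odd (((A ∆ B).filter P).card) ↔
      (Odd ((A.filter P).card) ↔ ¬ Odd ((B.filter P).card)) := by
  rw [filter_symmDiff']
  have := card_symmDiff' (A.filter P) (B.filter P)
  simp only [Nat.odd_iff] at *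
  omega

lemma ncard_sep_coe (A : Finset (Sym2 V)) (v : V) :
    {e ∈ (↑A : Set (Sym2 V)) | v ∈ e}.ncard = (A.filter (fun e => v ∈ e)).card := by
  have : {e ∈ (↑A : Set (Sym2 V)) | v ∈ e} = ↑(A.filter (fun e => v ∈ e)) := by
    ext e; simp
  rw [this, Set.ncard_coe_finset]

lemma isJoin_coe_iff {A : Finset (Sym2 V)} :
    IsJoin G T ↑A ↔ (↑A : Set (Sym2 V)) ⊆ G.edgeSet ∧
      ∀ v, (Odd ((A.filter (fun e => v ∈ e)).card) ↔ v ∈ T) := by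
  unfold IsJoin
  simp_rw [ncard_sep_coe]

lemma exists_finset_eq (F : Set (Sym2 V)) : ∃ A : Finset (Sym2 V), ↑A = F :=
  ⟨(Set.toFinite F).toFinset, Set.Finite.coe_toFinset _⟩

lemma sum_map_ew (l : List (Sym2 V)) (f : Sym2 V → Bool) (hf : ∀ e, f e = true ↔ e ∈ F) :
    (l.map (ew F)).sum = (l.length : ℤ) - 2 * (l.countP f) := by
  induction l with
  | nil => simp
  | cons a l ih =>
    simp only [List.map_cons, List.sum_cons, List.length_cons, List.countP_cons, ih]
    by_cases ha : a ∈ F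
    · have h1 : ew F a = -1 := if_pos ha
      have h2 : f a = true := (hf a).mpr ha
      rw [h1, h2]
      simp only [if_pos rfl]
      push_cast
      omega
    · have h1 : ew F a = 1 := if_neg ha
      have h2 : f a = false := by
        rcases Bool.eq_false_or_eq_true (f a) with h | h
        · exact absurd ((hf a).mp h) ha
        · exact h
      rw [h1, h2]
      simp only [Bool.false_eq_true, if_neg, if_false]
      push_cast
      omega

lemma even_cycle_filter {m : V} {c : G.Walk m m} (hc : c.IsCycle) (v : V) :
    Even ((c.edges.toFinset.filter (fun e => v ∈ e)).card) := by
  rw [countP_toFinset hc.isTrail.edges_nodup]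
  have := hc.isTrail.even_countP_edges_iff v
  simp only [ne_eq, not_true_eq_false, false_implies, iff_true] at this
  convert this using 2

/-- Conservativeness: every cycle has nonnegative weight w.r.t. a minimum join. -/
lemma cycle_nonneg (hmin : IsMinJoin G T F) {m : V} (c : G.Walk m m) (hc : c.IsCycle) :
    0 ≤ walkWeight F c := by
  obtain ⟨A, rfl⟩ := exists_finset_eq F
  have hCedge : ∀ e ∈ c.edges.toFinset, e ∈ G.edgeSet := by
    intro e he; rw [List.mem_toFinset] at he; exact c.edges_subset_edgeSet he
  -- K = A ∆ C is a join
  have hK : IsJoin G T ↑(A ∆ c.edges.toFinset) := by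
    rw [isJoin_coe_iff]
    constructor
    · intro e he
      simp only [Finset.coe_symmDiff, Set.mem_symmDiff] at he
      rcases he with ⟨he, _⟩ | ⟨he, _⟩
      · exact (isJoin_coe_iff.mp hmin.1).1 he
      · exact hCedge e he
    · intro v
      rw [odd_filter_symmDiff]
      have hA := (isJoin_coe_iff.mp hmin.1).2 v
      have hCeven := even_cycle_filter hc v
      rw [Nat.not_odd_iff_even]
      tauto
  -- minimality
  have hle : A.card ≤ (A ∆ c.edges.toFinset).card := by
    have := hmin.2 _ hK
    rwa [Set.ncard_coe_finset, Set.ncard_coe_finset] at this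
  have hcard := card_symmDiff' A c.edges.toFinset
  -- weight
  have hnodup := hc.isTrail.edges_nodup
  have h2 : c.edges.toFinset ∩ A = c.edges.toFinset.filter (fun e => e ∈ (↑A : Set (Sym2 V))) := by
    ext e; simp
  have h3 := countP_toFinset (l := c.edges) hnodup (fun e => e ∈ (↑A : Set (Sym2 V)))
  have h1 : c.edges.toFinset.card = c.edges.length := List.toFinset_card_of_nodup hnodup
  have hw : walkWeight (↑A) c
      = (c.edges.toFinset.card : ℤ) - 2 * ((c.edges.toFinset ∩ A).card : ℤ) := by
    unfold walkWeight
    rw [sum_map_ew c.edges (fun e => decide (e ∈ (↑A : Set (Sym2 V)))) (fun e => by simp),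
      h2, h3, h1]
  rw [hw]
  have h4 : (c.edges.toFinset ∩ A).card = (A ∩ c.edges.toFinset).card := by
    rw [Finset.inter_comm]
  omega



lemma start_edge {u w : V} (p : G.Walk u w) (hp : p.IsPath) {e : Sym2 V}
    (he : e ∈ p.edges) (hu : u ∈ e) :
    ∃ (y : V) (h : G.Adj u y) (q : G.Walk y w), p = Walk.cons h q ∧ e = s(u, y)
      ∧ q.IsPath ∧ e ∉ q.edges ∧ u ∉ q.support := by
  cases p with
  | nil => simp at he
  | @cons _ b _ h q =>
    rw [Walk.cons_isPath_iff] at hp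
    have husupp : ∀ e' ∈ q.edges, u ∈ e' → False := by
      intro e' he' hue'
      obtain ⟨c, rfl⟩ := Sym2.mem_iff_exists.mp hue'
      exact hp.2 (q.fst_mem_support_of_mem_edges he')
    rcases List.mem_cons.mp he with rfl | hq
    · exact ⟨b, h, q, rfl, rfl, hp.1, fun hc => husupp _ hc hu, hp.2⟩
    · exact absurd hq (fun hc => husupp _ hc hu)

lemma start_edge_unique {u w : V} (p : G.Walk u w) (hp : p.IsPath) {e₁ e₂ : Sym2 V}
    (h1 : e₁ ∈ p.edges) (hu1 : u ∈ e₁) (h2 : e₂ ∈ p.edges) (hu2 : u ∈ e₂) : e₁ = e₂ := by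
  obtain ⟨y₁, _, q₁, hpe₁, he₁, _, _, _⟩ := start_edge p hp h1 hu1
  obtain ⟨y₂, _, q₂, hpe₂, he₂, _, _, _⟩ := start_edge p hp h2 hu2
  rw [hpe₁] at hpe₂
  rw [he₁, he₂]
  cases hpe₂
  rfl

lemma end_edge {u w : V} (p : G.Walk u w) (hp : p.IsPath) {e : Sym2 V}
    (he : e ∈ p.edges) (hw : w ∈ e) :
    ∃ (y : V) (q : G.Walk u y), q.IsPath ∧ e = s(y, w) ∧ e ∉ q.edges
      ∧ walkWeight F p = walkWeight F q + ew F e ∧ G.Adj y w := by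
  have hrev : e ∈ p.reverse.edges := by rw [Walk.edges_reverse]; simpa using he
  obtain ⟨y, h, q, hpe, hee, hq, henq, _⟩ := start_edge p.reverse hp.reverse hrev hw
  refine ⟨y, q.reverse, hq.reverse, ?_, ?_, ?_, h.symm⟩
  · rw [hee, Sym2.eq_swap]
  · rw [Walk.edges_reverse, List.mem_reverse]; exact henq
  · have h0 : walkWeight F p = walkWeight F p.reverse := (walkWeight_reverse p).symm
    rw [h0, hpe, walkWeight_cons, walkWeight_reverse, ← hee]
    ring

lemma end_edge_unique {u w : V} (p : G.Walk u w) (hp : p.IsPath) {e₁ e₂ : Sym2 V}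
    (h1 : e₁ ∈ p.edges) (hw1 : w ∈ e₁) (h2 : e₂ ∈ p.edges) (hw2 : w ∈ e₂) : e₁ = e₂ := by
  have hr1 : e₁ ∈ p.reverse.edges := by rw [Walk.edges_reverse]; simpa using h1
  have hr2 : e₂ ∈ p.reverse.edges := by rw [Walk.edges_reverse]; simpa using h2
  exact start_edge_unique p.reverse hp.reverse hr1 hw1 hr2 hw2

/-- Extension bound: if the edge `s(m,y)` does not lie on the path `p : r → m`,
then `dist r y ≤ w(p) + ew(s(m,y))`. -/
lemma dist_ext (hmin : IsMinJoin G T F) {r m y : V} (p : G.Walk r m) (hp : p.IsPath)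
    (h : G.Adj m y) (he : s(m, y) ∉ p.edges) :
    distF G F r y ≤ walkWeight F p + ew F s(m, y) := by
  by_cases hy : y ∈ p.support
  · have hp1 := hp.takeUntil hy
    have hp2 := hp.dropUntil hy
    have hspec := p.take_spec hy
    have hcyc : (Walk.cons h (p.dropUntil y hy)).IsCycle := by
      rw [Walk.cons_isCycle_iff]
      exact ⟨hp2, fun hc => he (Walk.edges_dropUntil_subset _ hy hc)⟩
    have hw := cycle_nonneg hmin _ hcyc
    rw [walkWeight_cons] at hw
    have hsplit : walkWeight F p
        = walkWeight F (p.takeUntil y hy) + walkWeight F (p.dropUntil y hy) := by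
      conv_lhs => rw [← hspec]
      rw [walkWeight_append]
    have hle := distF_le_path (F := F) (p.takeUntil y hy) hp1
    omega
  · have hq : ((Walk.cons h.symm p.reverse).reverse : G.Walk r y).IsPath := by
      rw [Walk.isPath_reverse_iff, Walk.cons_isPath_iff]
      exact ⟨hp.reverse, by simpa using hy⟩
    have hle := distF_le_path (F := F) _ hq
    rw [walkWeight_reverse, walkWeight_cons, walkWeight_reverse] at hle
    have hs : s(y, m) = s(m, y) := Sym2.eq_swap
    rw [hs] at hle
    omega

lemma distF_lip (hmin : IsMinJoin G T F) (hc : G.Connected) {r u v : V} (h : G.Adj u v) :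
    distF G F r v ≤ distF G F r u + 1 := by
  obtain ⟨p, hp, hw⟩ := exists_min_path (F := F) hc r u
  by_cases he : s(u, v) ∈ p.edges
  · obtain ⟨y, q, hq, hee, _, hwq, _⟩ := end_edge (F := F) p hp he (by simp)
    have hyv : y = v := by
      rw [Sym2.eq_iff] at hee
      rcases hee with ⟨h1, h2⟩ | ⟨h1, h2⟩
      · exact absurd h2.symm h.ne
      · exact h2.symm
    have hle : distF G F r v ≤ walkWeight F q := hyv ▸ distF_le_path (F := F) q hq
    have he1 := neg_one_le_ew (F := F) s(u, v)
    omega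
  · have := dist_ext hmin p hp h he
    have he1 := ew_le_one (F := F) s(u, v)
    omega



/-- Sum of edge weights over a finset. -/
lemma wFs_eq (A S : Finset (Sym2 V)) :
    ∑ e ∈ S, ew (↑A : Set (Sym2 V)) e = (S.card : ℤ) - 2 * ((S ∩ A).card : ℤ) := by
  classical
  have hsplit := Finset.sum_sdiff (f := ew (↑A : Set (Sym2 V)))
    (Finset.inter_subset_left (s₁ := S) (s₂ := A))
  have h1 : ∀ e ∈ S ∩ A, ew (↑A : Set (Sym2 V)) e = -1 := by
    intro e he
    exact if_pos (by simpa using (Finset.mem_inter.mp he).2)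
  have h2 : ∀ e ∈ S \ (S ∩ A), ew (↑A : Set (Sym2 V)) e = 1 := by
    intro e he
    rw [Finset.mem_sdiff, Finset.mem_inter] at he
    exact if_neg (by simpa using fun hc => he.2 ⟨he.1, hc⟩)
  rw [Finset.sum_congr rfl h1, Finset.sum_congr rfl h2] at hsplit
  simp only [Finset.sum_const, nsmul_eq_mul, mul_one, mul_neg_one] at hsplit
  have hc1 : (S \ (S ∩ A)).card = S.card - (S ∩ A).card :=
    Finset.card_sdiff_of_subset Finset.inter_subset_left
  have hle : (S ∩ A).card ≤ S.card := Finset.card_le_card Finset.inter_subset_left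
  rw [hc1] at hsplit
  have := Nat.cast_sub (R := ℤ) hle
  omega

lemma walkWeight_eq_card {a b : V} {p : G.Walk a b} (ht : p.edges.Nodup)
    (A : Finset (Sym2 V)) :
    walkWeight (↑A : Set (Sym2 V)) p
      = (p.edges.toFinset.card : ℤ) - 2 * ((p.edges.toFinset ∩ A).card : ℤ) := by
  have h2 : p.edges.toFinset ∩ A
      = p.edges.toFinset.filter (fun e => e ∈ (↑A : Set (Sym2 V))) := by
    ext e; simp
  have h3 := countP_toFinset (l := p.edges) ht (fun e => e ∈ (↑A : Set (Sym2 V)))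
  have h1 : p.edges.toFinset.card = p.edges.length := List.toFinset_card_of_nodup ht
  unfold walkWeight
  rw [sum_map_ew p.edges (fun e => decide (e ∈ (↑A : Set (Sym2 V)))) (fun e => by simp),
    h2, h3, h1]

lemma walkWeight_eq_sum {a b : V} {p : G.Walk a b} (ht : p.edges.Nodup)
    (A : Finset (Sym2 V)) :
    walkWeight (↑A : Set (Sym2 V)) p = ∑ e ∈ p.edges.toFinset, ew (↑A : Set (Sym2 V)) e := by
  rw [walkWeight_eq_card ht A, wFs_eq]

lemma exists_cycle_of_even (S : Finset (Sym2 V)) (hS : ∀ e ∈ S, e ∈ G.edgeSet)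
    (hev : ∀ v, Even ((S.filter (fun e => v ∈ e)).card)) (hne : S.Nonempty) :
    ∃ (m : V) (c : G.Walk m m), c.IsCycle ∧ ∀ e ∈ c.edges, e ∈ S := by
  by_contra hnc
  push_neg at hnc
  have grow : ∀ (a b : V) (p : G.Walk a b), p.IsPath → (∀ e ∈ p.edges, e ∈ S) →
      1 ≤ p.length → ∃ (a' : V) (p' : G.Walk a' b), p'.IsPath ∧
        (∀ e ∈ p'.edges, e ∈ S) ∧ p'.length = p.length + 1 := by
    intro a b p hp hpe hlen
    cases p with
    | nil => simp at hlen
    | @cons _ y _ h q =>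
      have hfirst : s(a, y) ∈ S := hpe _ (by simp)
      have hmemf : s(a, y) ∈ S.filter (fun e => a ∈ e) :=
        Finset.mem_filter.mpr ⟨hfirst, by simp⟩
      have hcard : 1 < (S.filter (fun e => a ∈ e)).card := by
        have hpos : 0 < (S.filter (fun e => a ∈ e)).card :=
          Finset.card_pos.mpr ⟨_, hmemf⟩
        have := hev a
        rw [Nat.even_iff] at this
        omega
      obtain ⟨e', he'f, hne'⟩ := Finset.exists_mem_ne hcard s(a, y)
      rw [Finset.mem_filter] at he'f
      obtain ⟨c, rfl⟩ := Sym2.mem_iff_exists.mp he'f.2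
      have hadj : G.Adj a c := (G.mem_edgeSet).mp (hS _ he'f.1)
      by_cases hcs : c ∈ (Walk.cons h q).support
      · exfalso
        have hq' := hp.takeUntil hcs
        have hnotin : s(c, a) ∉ ((Walk.cons h q).takeUntil c hcs).edges := by
          intro hcon
          have hin : s(c, a) ∈ (Walk.cons h q).edges :=
            Walk.edges_takeUntil_subset _ hcs hcon
          have : s(c, a) = s(a, y) :=
            start_edge_unique _ hp hin (by simp) (by simp) (by simp)
          rw [Sym2.eq_swap] at this
          exact hne' this
        have hcyc : (Walk.cons hadj.symm ((Walk.cons h q).takeUntil c hcs)).IsCycle := by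
          rw [Walk.cons_isCycle_iff]
          exact ⟨hq', hnotin⟩
        have := hnc c _ hcyc
        obtain ⟨e'', he''mem, he''notS⟩ := this
        apply he''notS
        rw [Walk.edges_cons, List.mem_cons] at he''mem
        rcases he''mem with rfl | hmem2
        · have hsw : s(c, a) = s(a, c) := Sym2.eq_swap
          rw [hsw]; exact he'f.1
        · exact hpe _ (Walk.edges_takeUntil_subset _ hcs hmem2)
      · refine ⟨c, Walk.cons hadj.symm (Walk.cons h q), ?_, ?_, by simp⟩
        · rw [Walk.cons_isPath_iff]
          exact ⟨hp, hcs⟩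
        · intro e he
          rw [Walk.edges_cons, List.mem_cons] at he
          rcases he with rfl | hmem2
          · have hsw : s(c, a) = s(a, c) := Sym2.eq_swap
            rw [hsw]; exact he'f.1
          · exact hpe _ hmem2
  -- build arbitrarily long paths
  have build : ∀ n : ℕ, ∃ (a b : V) (p : G.Walk a b), p.IsPath ∧
      (∀ e ∈ p.edges, e ∈ S) ∧ p.length = n + 1 := by
    intro n
    induction n with
    | zero =>
      obtain ⟨e, he⟩ := hne
      obtain ⟨x, hrep⟩ := Sym2.mem_iff_exists.mp (Sym2.out_fst_mem e)
      rw [hrep] at he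
      have hadj : G.Adj e.out.1 x := (G.mem_edgeSet).mp (hS _ he)
      refine ⟨e.out.1, x, Walk.cons hadj Walk.nil, ?_, ?_, by simp⟩
      · rw [Walk.cons_isPath_iff]
        simp [hadj.ne]
      · intro e' he'
        rw [Walk.edges_cons, List.mem_cons] at he'
        rcases he' with rfl | h0
        · exact he
        · simp at h0
    | succ n ih =>
      obtain ⟨a, b, p, hp, hpe, hlen⟩ := ih
      obtain ⟨a', p', hp', hpe', hlen'⟩ := grow a b p hp hpe (by omega)
      exact ⟨a', b, p', hp', hpe', by omega⟩
  obtain ⟨a, b, p, hp, _, hlen⟩ := build (Fintype.card V)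
  have := hp.length_lt
  omega

lemma even_wF_nonneg {A : Finset (Sym2 V)} (hmin : IsMinJoin G T ↑A) :
    ∀ (n : ℕ) (S : Finset (Sym2 V)), S.card ≤ n → (∀ e ∈ S, e ∈ G.edgeSet) →
    (∀ v, Even ((S.filter (fun e => v ∈ e)).card)) →
    0 ≤ ∑ e ∈ S, ew (↑A : Set (Sym2 V)) e := by
  intro n
  induction n with
  | zero =>
    intro S hcard _ _
    have : S = ∅ := Finset.card_eq_zero.mp (Nat.le_zero.mp hcard)
    simp [this]
  | succ n ih =>
    intro S hcard hS hev
    rcases S.eq_empty_or_nonempty with rfl | hne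
    · simp
    obtain ⟨m, c, hcyc, hce⟩ := exists_cycle_of_even S hS hev hne
    have hnodup := hcyc.isTrail.edges_nodup
    have hsub : c.edges.toFinset ⊆ S := fun e he => hce e (List.mem_toFinset.mp he)
    have hCne : c.edges.toFinset.Nonempty := by
      cases c with
      | nil => exact absurd hcyc Walk.IsCycle.not_of_nil
      | @cons _ y _ h q =>
        refine ⟨s(m, y), ?_⟩
        rw [List.mem_toFinset, Walk.edges_cons]
        exact List.mem_cons_self
    have hsplit := Finset.sum_sdiff (f := ew (↑A : Set (Sym2 V))) hsub
    have hcw : 0 ≤ ∑ e ∈ c.edges.toFinset, ew (↑A : Set (Sym2 V)) e := by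
      rw [← walkWeight_eq_sum hnodup A]
      exact cycle_nonneg hmin c hcyc
    have hrest : 0 ≤ ∑ e ∈ S \ c.edges.toFinset, ew (↑A : Set (Sym2 V)) e := by
      apply ih
      · have h1 := Finset.card_sdiff_of_subset hsub
        have h2 := Finset.card_pos.mpr hCne
        have h3 := Finset.card_le_card hsub
        omega
      · intro e he
        exact hS e (Finset.mem_sdiff.mp he).1
      · intro v
        have heq : (S \ c.edges.toFinset).filter (fun e => v ∈ e)
            = S.filter (fun e => v ∈ e) \ (c.edges.toFinset.filter (fun e => v ∈ e)) := by
          ext e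
          simp only [Finset.mem_filter, Finset.mem_sdiff]
          tauto
        have hsubf : c.edges.toFinset.filter (fun e => v ∈ e) ⊆ S.filter (fun e => v ∈ e) :=
          Finset.filter_subset_filter _ hsub
        have hlef := Finset.card_le_card hsubf
        have h4 := hev v
        have h5 := even_cycle_filter hcyc v
        rw [heq, Finset.card_sdiff_of_subset hsubf]
        rw [Nat.even_iff] at h4 h5 ⊢
        omega
    omega

lemma exists_path_of_odd :
    ∀ (n : ℕ) (S : Finset (Sym2 V)), S.card ≤ n → (∀ e ∈ S, e ∈ G.edgeSet) →
    ∀ {r x : V}, r ≠ x → (∀ v, Odd ((S.filter (fun e => v ∈ e)).card) ↔ (v = r ∨ v = x)) →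
    ∃ p : G.Walk r x, p.IsPath ∧ ∀ e ∈ p.edges, e ∈ S := by
  intro n
  induction n with
  | zero =>
    intro S hcard _ r x hrx hodd
    have hS0 : S = ∅ := Finset.card_eq_zero.mp (Nat.le_zero.mp hcard)
    subst hS0
    have := (hodd r).mpr (Or.inl rfl)
    simp at this
  | succ n ih =>
    intro S hcard hS r x hrx hodd
    have hoddr := (hodd r).mpr (Or.inl rfl)
    have hner : (S.filter (fun e => r ∈ e)).Nonempty := by
      rw [← Finset.card_pos]
      rcases hoddr with ⟨k, hk⟩
      omega
    obtain ⟨e, hef⟩ := hner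
    rw [Finset.mem_filter] at hef
    obtain ⟨b, rfl⟩ := Sym2.mem_iff_exists.mp hef.2
    have hadj : G.Adj r b := (G.mem_edgeSet).mp (hS _ hef.1)
    by_cases hbx : b = x
    · subst hbx
      refine ⟨Walk.cons hadj Walk.nil, ?_, ?_⟩
      · rw [Walk.cons_isPath_iff]
        simp [hadj.ne]
      · intro e' he'
        simp only [Walk.edges_cons, Walk.edges_nil] at he'
        rw [List.mem_cons] at he'
        rcases he' with rfl | h0
        · exact hef.1
        · simp at h0
    · -- recurse on S.erase s(r,b) with endpoints b, x
      have hcnt : ∀ v : V, (((S.erase s(r, b)).filter (fun e' => v ∈ e')).card : ℤ)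
          = ((S.filter (fun e' => v ∈ e')).card : ℤ) - (if v ∈ s(r, b) then 1 else 0) := by
        intro v
        have herase : (S.erase s(r, b)).filter (fun e' => v ∈ e')
            = (S.filter (fun e' => v ∈ e')).erase s(r, b) := by
          ext e'
          simp only [Finset.mem_filter, Finset.mem_erase]
          tauto
        rw [herase]
        by_cases hv : v ∈ s(r, b)
        · rw [if_pos hv]
          have hmem : s(r, b) ∈ S.filter (fun e' => v ∈ e') :=
            Finset.mem_filter.mpr ⟨hef.1, hv⟩
          rw [Finset.card_erase_of_mem hmem]
          have := Finset.card_pos.mpr ⟨_, hmem⟩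
          push_cast [Nat.cast_sub (by omega : 1 ≤ (S.filter (fun e' => v ∈ e')).card)]
          omega
        · rw [if_neg hv]
          have hnm : s(r, b) ∉ S.filter (fun e' => v ∈ e') := by
            intro hc
            exact hv (Finset.mem_filter.mp hc).2
          rw [Finset.erase_eq_of_notMem hnm]
          omega
      have hbr : b ≠ r := hadj.ne'
      have hodd' : ∀ v, Odd (((S.erase s(r, b)).filter (fun e' => v ∈ e')).card)
          ↔ (v = b ∨ v = x) := by
        intro v
        have h1 := hodd v
        have h2 := hcnt v
        have hve : v ∈ s(r, b) ↔ (v = r ∨ v = b) := Sym2.mem_iff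
        by_cases hvr : v = r
        · subst hvr
          rw [if_pos (hve.mpr (Or.inl rfl))] at h2
          have h3 : Odd ((S.filter (fun e' => v ∈ e')).card) := (h1).mpr (Or.inl rfl)
          constructor
          · intro h4
            exfalso
            rw [Nat.odd_iff] at h3 h4
            omega
          · intro h4
            rcases h4 with h4 | h4
            · exact absurd h4.symm hbr
            · exact absurd h4 hrx
        · by_cases hvb : v = b
          · subst hvb
            rw [if_pos (hve.mpr (Or.inr rfl))] at h2
            have h3 : ¬ Odd ((S.filter (fun e' => v ∈ e')).card) := by
              rw [h1]
              push_neg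
              exact ⟨hvr, hbx⟩
            have h5 : 0 < (S.filter (fun e' => v ∈ e')).card :=
              Finset.card_pos.mpr ⟨_, Finset.mem_filter.mpr ⟨hef.1, hve.mpr (Or.inr rfl)⟩⟩
            constructor
            · intro _; exact Or.inl rfl
            · intro _
              rw [Nat.odd_iff] at h3 ⊢
              omega
          · rw [if_neg (fun hc => (hve.mp hc).elim hvr hvb)] at h2
            constructor
            · intro h4
              have : Odd ((S.filter (fun e' => v ∈ e')).card) := by
                rw [Nat.odd_iff] at h4 ⊢
                omega
              rcases h1.mp this with h5 | h5
              · exact absurd h5 hvr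
              · exact Or.inr h5
            · intro h4
              rcases h4 with h4 | h4
              · exact absurd h4 hvb
              · have : Odd ((S.filter (fun e' => v ∈ e')).card) := h1.mpr (Or.inr h4)
                rw [Nat.odd_iff] at this ⊢
                omega
      have hcard' : (S.erase s(r, b)).card ≤ n := by
        rw [Finset.card_erase_of_mem hef.1]
        omega
      have hS' : ∀ e ∈ S.erase s(r, b), e ∈ G.edgeSet :=
        fun e he => hS e (Finset.mem_of_mem_erase he)
      obtain ⟨p₁, hp₁, hp₁e⟩ := ih (S.erase s(r, b)) hcard' hS' hbx hodd'
      refine ⟨(Walk.cons hadj p₁).bypass, Walk.bypass_isPath _, ?_⟩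
      intro e' he'
      have := (Walk.cons hadj p₁).edges_bypass_subset he'
      rw [Walk.edges_cons, List.mem_cons] at this
      rcases this with rfl | h0
      · exact hef.1
      · exact Finset.mem_of_mem_erase (hp₁e _ h0)


lemma odd_path_filter {r x : V} (hrx : r ≠ x) {p : G.Walk r x} (hp : p.IsPath) (v : V) :
    Odd ((p.edges.toFinset.filter (fun e => v ∈ e)).card) ↔ (v = r ∨ v = x) := by
  rw [countP_toFinset hp.isTrail.edges_nodup (fun e => v ∈ e)]
  have h := hp.isTrail.even_countP_edges_iff v
  rw [Nat.odd_iff]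
  rw [Nat.even_iff] at h
  constructor
  · intro h1
    by_contra hcon
    push_neg at hcon
    have := h.mpr (fun _ => hcon)
    omega
  · intro h1
    have h2 : ¬ ((p.edges.countP fun e => v ∈ e) % 2 = 0) := by
      intro h0
      rcases (h.mp h0) hrx with ⟨ha, hb⟩
      rcases h1 with rfl | rfl
      · exact ha rfl
      · exact hb rfl
    omega

lemma even_sdiff_filter_of_odd_odd {S P : Finset (Sym2 V)} (hsub : P ⊆ S) {r x : V}
    (h1 : ∀ v, Odd ((S.filter (fun e => v ∈ e)).card) ↔ (v = r ∨ v = x))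
    (h2 : ∀ v, Odd ((P.filter (fun e => v ∈ e)).card) ↔ (v = r ∨ v = x)) (v : V) :
    Even (((S \ P).filter (fun e => v ∈ e)).card) := by
  have heq : (S \ P).filter (fun e => v ∈ e)
      = S.filter (fun e => v ∈ e) \ P.filter (fun e => v ∈ e) := by
    ext e
    simp only [Finset.mem_filter, Finset.mem_sdiff]
    tauto
  have hsubf := Finset.filter_subset_filter (fun e => v ∈ e) hsub
  have hle := Finset.card_le_card hsubf
  rw [heq, Finset.card_sdiff_of_subset hsubf, Nat.even_iff]
  have o1 := h1 v
  have o2 := h2 v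
  rw [Nat.odd_iff] at o1 o2
  have hpar : (S.filter (fun e => v ∈ e)).card % 2 = (P.filter (fun e => v ∈ e)).card % 2 := by
    by_cases hv : v = r ∨ v = x
    · have a1 := o1.mpr hv
      have a2 := o2.mpr hv
      omega
    · have a1 : ¬ _ := fun h => hv (o1.mp h)
      have a2 : ¬ _ := fun h => hv (o2.mp h)
      omega
  omega

lemma distF_le_distF {F' : Set (Sym2 V)} (hF : IsMinJoin G T F) (hF' : IsMinJoin G T F')
    (hc : G.Connected) (r x : V) : distF G F r x ≤ distF G F' r x := by
  by_cases hrx : r = x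
  · subst hrx
    rw [distF_self, distF_self]
  obtain ⟨A, rfl⟩ := exists_finset_eq F
  obtain ⟨A', rfl⟩ := exists_finset_eq F'
  obtain ⟨p', hp', hw'⟩ := exists_min_path (F := (↑A' : Set (Sym2 V))) hc r x
  have hnodup' := hp'.isTrail.edges_nodup
  set P := p'.edges.toFinset with hP
  set S := A ∆ (A' ∆ P) with hS
  have hSedge : ∀ e ∈ S, e ∈ G.edgeSet := by
    intro e he
    rw [hS, Finset.mem_symmDiff] at he
    rcases he with ⟨he, _⟩ | ⟨he, _⟩
    · exact hF.1.1 (Finset.mem_coe.mpr he)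
    · rw [Finset.mem_symmDiff] at he
      rcases he with ⟨he, _⟩ | ⟨he, _⟩
      · exact hF'.1.1 (Finset.mem_coe.mpr he)
      · exact p'.edges_subset_edgeSet (by rw [hP] at he; exact List.mem_toFinset.mp he)
  have hPodd : ∀ v, Odd ((P.filter (fun e => v ∈ e)).card) ↔ (v = r ∨ v = x) :=
    fun v => odd_path_filter hrx hp' v
  have hSodd : ∀ v, Odd ((S.filter (fun e => v ∈ e)).card) ↔ (v = r ∨ v = x) := by
    intro v
    rw [hS, odd_filter_symmDiff, odd_filter_symmDiff]
    rw [(isJoin_coe_iff.mp hF.1).2 v, (isJoin_coe_iff.mp hF'.1).2 v, hPodd v]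
    by_cases hT : v ∈ T <;> by_cases hv : (v = r ∨ v = x) <;> simp [hT, hv]
  obtain ⟨p, hp, hpe⟩ := exists_path_of_odd S.card S le_rfl hSedge hrx hSodd
  have hnodup := hp.isTrail.edges_nodup
  have hPpsub : p.edges.toFinset ⊆ S := fun e he => hpe e (List.mem_toFinset.mp he)
  have hppodd : ∀ v, Odd ((p.edges.toFinset.filter (fun e => v ∈ e)).card) ↔ (v = r ∨ v = x) :=
    fun v => odd_path_filter hrx hp v
  have hrest : 0 ≤ ∑ e ∈ S \ p.edges.toFinset, ew (↑A : Set (Sym2 V)) e := by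
    refine even_wF_nonneg hF (S \ p.edges.toFinset).card _ le_rfl ?_ ?_
    · intro e he
      exact hSedge e (Finset.mem_sdiff.mp he).1
    · exact even_sdiff_filter_of_odd_odd hPpsub hSodd hppodd
  have hsplit := Finset.sum_sdiff (f := ew (↑A : Set (Sym2 V))) hPpsub
  have hwp : walkWeight (↑A : Set (Sym2 V)) p = ∑ e ∈ p.edges.toFinset, ew (↑A : Set (Sym2 V)) e :=
    walkWeight_eq_sum hnodup A
  have hge : distF G (↑A) r x ≤ ∑ e ∈ S, ew (↑A : Set (Sym2 V)) e := by
    have := distF_le_path (F := (↑A : Set (Sym2 V))) p hp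
    omega
  have hKcard : (((A' ∆ P)).card : ℤ) = (A'.card : ℤ) + walkWeight (↑A' : Set (Sym2 V)) p' := by
    have h1 := card_symmDiff' A' P
    have h2 := walkWeight_eq_card hnodup' A'
    rw [← hP] at h2
    have h3 : (P ∩ A').card = (A' ∩ P).card := by rw [Finset.inter_comm]
    rw [h2, h3]
    push_cast
    omega
  have hAS : A ∆ S = A' ∆ P := by rw [hS, symmDiff_symmDiff_cancel_left]
  have hAScard : (((A' ∆ P)).card : ℤ) = (A.card : ℤ) + ∑ e ∈ S, ew (↑A : Set (Sym2 V)) e := by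
    rw [← hAS]
    have h1 := card_symmDiff' A S
    have h2 := wFs_eq A S
    have h3 : (S ∩ A).card = (A ∩ S).card := by rw [Finset.inter_comm]
    rw [h2, h3]
    push_cast
    omega
  have hAA' : A.card = A'.card := by
    have h1 := hF.2 _ hF'.1
    have h2 := hF'.2 _ hF.1
    rw [Set.ncard_coe_finset, Set.ncard_coe_finset] at h1 h2
    omega
  rw [← hw']
  omega

lemma distF_indep {F' : Set (Sym2 V)} (hF : IsMinJoin G T F) (hF' : IsMinJoin G T F')
    (hc : G.Connected) (r x : V) : distF G F r x = distF G F' r x :=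
  le_antisymm (distF_le_distF hF hF' hc r x) (distF_le_distF hF' hF hc r x)



lemma restrict_adj_reach {S : Set V} {a b : V} (h : G.Adj a b) (ha : a ∈ S) (hb : b ∈ S) :
    (sgRestrict G S).Reachable a b :=
  SimpleGraph.Adj.reachable (show (sgRestrict G S).Adj a b from ⟨h, ha, hb⟩)

/-- `v` is pinned by edge `e`: every minimum path from `r` to `v` uses `e`. -/
def PinnedP (G : SimpleGraph V) (F : Set (Sym2 V)) (r v : V) (e : Sym2 V) : Prop :=
  e ∈ F ∧ v ∈ e ∧ ∀ p : G.Walk r v, p.IsPath → walkWeight F p = distF G F r v → e ∈ p.edges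

lemma seed_pinned (hF : IsMinJoin G T F) {r z a : V} (he : s(z, a) ∈ F)
    (hz : 1 ≤ distF G F r z) (ha : distF G F r a ≤ 0) : PinnedP G F r a s(z, a) := by
  refine ⟨he, by simp, ?_⟩
  intro p hp hw
  by_contra hne
  have hadj : G.Adj a z := ((G.mem_edgeSet).mp (hF.1.1 he)).symm
  have hnot : s(a, z) ∉ p.edges := by
    rw [Sym2.eq_swap]; exact hne
  have hext := dist_ext hF p hp hadj hnot
  have hew : ew F s(a, z) = -1 := if_pos (by rw [Sym2.eq_swap]; exact he)
  omega

lemma descent_step (hc : G.Connected) (hF : IsMinJoin G T F) {r v : V} {g : Sym2 V}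
    (hbad : ¬ (sgRestrict G {z | distF G F r z ≤ 0}).Reachable r v)
    (hdv : distF G F r v ≤ 0) (hpin : PinnedP G F r v g) (hvT : v ∉ T) :
    ∃ (v' : V) (f : Sym2 V), PinnedP G F r v' f ∧ distF G F r v' = distF G F r v - 1 ∧
      ¬ (sgRestrict G {z | distF G F r z ≤ 0}).Reachable r v' := by
  have hEv : Even {e ∈ F | v ∈ e}.ncard :=
    Nat.not_odd_iff_even.mp (fun h => hvT ((hF.1.2 v).mp h))
  have hgmem : g ∈ {e ∈ F | v ∈ e} := ⟨hpin.1, hpin.2.1⟩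
  have hpos : 0 < {e ∈ F | v ∈ e}.ncard :=
    (Set.ncard_pos (Set.toFinite _)).mpr ⟨g, hgmem⟩
  have h1lt : 1 < {e ∈ F | v ∈ e}.ncard := by
    rcases hEv with ⟨k, hk⟩
    omega
  obtain ⟨f, hfmem, hfg⟩ := Set.exists_ne_of_one_lt_ncard h1lt g
  obtain ⟨v', hfrep⟩ := Sym2.mem_iff_exists.mp hfmem.2
  have hfF : f ∈ F := hfmem.1
  have hadj : G.Adj v v' := by
    have := hF.1.1 hfF
    rw [hfrep] at this
    exact (G.mem_edgeSet).mp this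
  obtain ⟨p, hp, hw⟩ := exists_min_path (F := F) hc r v
  have hgp : g ∈ p.edges := hpin.2.2 p hp hw
  have hfnp : f ∈ p.edges → False := by
    intro hcon
    exact hfg (end_edge_unique p hp hcon (hfrep ▸ (by simp)) hgp hpin.2.1)
  have hext : distF G F r v' ≤ distF G F r v - 1 := by
    have h0 := dist_ext hF p hp hadj (by rw [← hfrep]; exact hfnp)
    have hew : ew F s(v, v') = -1 := if_pos (hfrep ▸ hfF)
    omega
  have hlip : distF G F r v ≤ distF G F r v' + 1 := distF_lip hF hc hadj.symm
  have hdeq : distF G F r v' = distF G F r v - 1 := by omega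
  have hbad' : ¬ (sgRestrict G {z | distF G F r z ≤ 0}).Reachable r v' := by
    intro hr
    exact hbad (hr.trans (restrict_adj_reach hadj.symm (by simp; omega) (by simp; omega)))
  refine ⟨v', f, ⟨hfF, hfrep ▸ (by simp), ?_⟩, hdeq, hbad'⟩
  intro p' hp' hw'
  by_contra hne
  have hadj' : G.Adj v' v := hadj.symm
  have hnot : s(v', v) ∉ p'.edges := by
    intro hcon
    apply hne
    rw [hfrep, Sym2.eq_swap]
    exact hcon
  have hext' := dist_ext hF p' hp' hadj' hnot
  have hew' : ew F s(v', v) = -1 := if_pos (by rw [Sym2.eq_swap, ← hfrep]; exact hfF)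
  omega

lemma descent_iter (hc : G.Connected) (hF : IsMinJoin G T F) {r : V}
    (hTreach : ∀ t ∈ T, (sgRestrict G {z | distF G F r z ≤ 0}).Reachable r t) :
    ∀ (n : ℕ) (v : V) (g : Sym2 V), PinnedP G F r v g → distF G F r v ≤ 0 →
      ¬ (sgRestrict G {z | distF G F r z ≤ 0}).Reachable r v →
      ∃ v', distF G F r v' ≤ distF G F r v - n := by
  intro n
  induction n with
  | zero => exact fun v g _ _ _ => ⟨v, by omega⟩
  | succ n ih =>
    intro v g hpin hdv hbad
    have hvT : v ∉ T := fun hvT => hbad (hTreach v hvT)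
    obtain ⟨v', f, hpin', hdeq, hbad'⟩ := descent_step hc hF hbad hdv hpin hvT
    obtain ⟨v'', h''⟩ := ih v' f hpin' (by omega) hbad'
    exact ⟨v'', by push_cast; push_cast at h''; omega⟩

/-- No pinned bad vertex can exist. -/
lemma no_bad_pinned (hc : G.Connected) (hF : IsMinJoin G T F) {r v : V} {g : Sym2 V}
    (hTreach : ∀ t ∈ T, (sgRestrict G {z | distF G F r z ≤ 0}).Reachable r t)
    (hpin : PinnedP G F r v g) (hdv : distF G F r v ≤ 0)
    (hbad : ¬ (sgRestrict G {z | distF G F r z ≤ 0}).Reachable r v) : False := by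
  obtain ⟨v', hv'⟩ := descent_iter hc hF hTreach (Fintype.card (Sym2 V) + 1) v g hpin hdv hbad
  have := neg_card_le_distF (F := F) hc r v'
  push_cast at hv'
  omega

/-- No seed can exist. -/
lemma no_seed (hc : G.Connected) (hF : IsMinJoin G T F) {r z a : V}
    (hTreach : ∀ t ∈ T, (sgRestrict G {z | distF G F r z ≤ 0}).Reachable r t)
    (he : s(z, a) ∈ F) (hz : 1 ≤ distF G F r z) (hda : distF G F r a ≤ 0)
    (hbad : ¬ (sgRestrict G {z | distF G F r z ≤ 0}).Reachable r a) : False :=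
  no_bad_pinned hc hF hTreach (seed_pinned hF he hz hda) hda hbad

/-- Every edge of a minimum join lies in a component of `F` containing a `T`-vertex. -/
lemma exists_T_reachable (hF : IsMinJoin G T F) {e : Sym2 V} (he : e ∈ F) {u : V}
    (hu : u ∈ e) : ∃ t ∈ T, (SimpleGraph.fromEdgeSet F).Reachable u t := by
  by_contra hno
  push_neg at hno
  set R : Set V := {w | (SimpleGraph.fromEdgeSet F).Reachable u w} with hR
  have hstep : ∀ e' ∈ F, ∀ a ∈ e', a ∈ R → ∀ b ∈ e', b ∈ R := by
    intro e' he' a ha haR b hb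
    obtain ⟨c, rfl⟩ := Sym2.mem_iff_exists.mp ha
    have hac : a ≠ c := fun hcon => (G.loopless.irrefl a) (by
      have := hF.1.1 he'
      rw [hcon] at this ⊢
      exact (G.mem_edgeSet).mp this)
    have hadj : (SimpleGraph.fromEdgeSet F).Adj a c :=
      (SimpleGraph.fromEdgeSet_adj _).mpr ⟨he', hac⟩
    rcases Sym2.mem_iff.mp hb with rfl | rfl
    · exact haR
    · exact haR.trans hadj.reachable
  set F' : Set (Sym2 V) := {e' ∈ F | ∀ w ∈ e', w ∉ R} with hF'
  have hjoin : IsJoin G T F' := by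
    constructor
    · intro e' he'
      exact hF.1.1 he'.1
    · intro w
      by_cases hwR : w ∈ R
      · have hempty : {e' ∈ F' | w ∈ e'} = ∅ := by
          ext e'
          simp only [Set.mem_setOf_eq, Set.mem_empty_iff_false, iff_false]
          rintro ⟨⟨_, hall⟩, hw⟩
          exact hall w hw hwR
        rw [hempty]
        simp only [Set.ncard_empty]
        constructor
        · intro h; simp at h
        · intro hwT
          exact absurd (hno w hwT hwR) (by simp)
      · have heqset : {e' ∈ F' | w ∈ e'} = {e' ∈ F | w ∈ e'} := by
          ext e'
          simp only [Set.mem_setOf_eq, hF']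
          constructor
          · rintro ⟨⟨h1, _⟩, h2⟩; exact ⟨h1, h2⟩
          · rintro ⟨h1, h2⟩
            refine ⟨⟨h1, ?_⟩, h2⟩
            intro w' hw' hw'R
            exact hwR (hstep e' h1 w' hw' hw'R w h2)
        rw [heqset]
        exact hF.1.2 w
  have hssub : F' ⊂ F := by
    constructor
    · intro e' he'; exact he'.1
    · intro hsub
      have : e ∈ F' := hsub he
      exact this.2 u hu (by rw [hR]; exact Set.mem_setOf_eq ▸ Reachable.refl u)
  have := hF.2 F' hjoin
  have hlt := Set.ncard_lt_ncard hssub (Set.toFinite F)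
  omega

lemma exists_F_edge {z x : V} (q : G.Walk z x) (hneg : walkWeight F q < 0) :
    ∃ e ∈ q.edges, e ∈ F := by
  by_contra h
  push_neg at h
  exact absurd (walkWeight_nonneg_of_disjoint q h) (by omega)

/-- Walking along an `F`-walk from a bad vertex to a reachable vertex produces a seed. -/
lemma phase2 (hc : G.Connected) (hF : IsMinJoin G T F) {r : V}
    (hTreach : ∀ t ∈ T, (sgRestrict G {z | distF G F r z ≤ 0}).Reachable r t) :
    ∀ {u t : V} (w : (SimpleGraph.fromEdgeSet F).Walk u t),
      distF G F r u ≤ 0 → ¬ (sgRestrict G {z | distF G F r z ≤ 0}).Reachable r u →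
      (sgRestrict G {z | distF G F r z ≤ 0}).Reachable r t → False := by
  intro u t w
  induction w with
  | nil => intro _ hbad hreach; exact hbad hreach
  | @cons u m t h q ih =>
    intro hdu hbad hreach
    have hedge : s(u, m) ∈ F := ((SimpleGraph.fromEdgeSet_adj _).mp h).1
    have hadj : G.Adj u m := (G.mem_edgeSet).mp (hF.1.1 hedge)
    by_cases hdm : distF G F r m ≤ 0
    · by_cases hrm : (sgRestrict G {z | distF G F r z ≤ 0}).Reachable r m
      · exact hbad (hrm.trans (restrict_adj_reach hadj.symm (by simpa using hdm)
          (by simpa using hdu)))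
      · exact ih hdm hrm hreach
    · -- seed: edge s(m, u) ∈ F with dist m ≥ 1 and u bad
      have hsw : s(m, u) ∈ F := by rw [Sym2.eq_swap]; exact hedge
      exact no_seed hc hF hTreach hsw (by omega) hdu hbad

lemma last_split {Pr : V → Prop} {x : V} :
    ∀ {a : V} (p : G.Walk a x), p.IsPath → (∃ v ∈ p.support, Pr v) → ¬ Pr x →
    ∃ (z : V) (q₁ : G.Walk a z) (q₂ : G.Walk z x), q₁.IsPath ∧ q₂.IsPath ∧ Pr z ∧
      (∀ v ∈ q₂.support.tail, ¬ Pr v) ∧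
      walkWeight F p = walkWeight F q₁ + walkWeight F q₂ ∧
      (∀ v ∈ q₁.support, v ∈ p.support) := by
  intro a p
  induction p with
  | nil =>
    intro _ hex hnx
    obtain ⟨v, hv, hPv⟩ := hex
    rw [Walk.support_nil, List.mem_singleton] at hv
    subst hv
    exact absurd hPv hnx
  | @cons a b x' h q ih =>
    intro hp hex hnx
    rw [Walk.cons_isPath_iff] at hp
    by_cases hq : ∃ v ∈ q.support, Pr v
    · obtain ⟨z, q₁, q₂, h1, h2, h3, h4, h5, h6⟩ := ih hp.1 hq hnx
      refine ⟨z, Walk.cons h q₁, q₂, ?_, h2, h3, h4, ?_, ?_⟩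
      · rw [Walk.cons_isPath_iff]
        exact ⟨h1, fun hcon => hp.2 (h6 _ hcon)⟩
      · rw [walkWeight_cons, walkWeight_cons]
        omega
      · intro v hv
        rw [Walk.support_cons] at hv ⊢
        rcases List.mem_cons.mp hv with rfl | hv
        · exact List.mem_cons_self
        · exact List.mem_cons_of_mem _ (h6 _ hv)
    · push_neg at hq
      obtain ⟨v, hv, hPv⟩ := hex
      rw [Walk.support_cons, List.mem_cons] at hv
      rcases hv with rfl | hv
      · refine ⟨v, Walk.nil, Walk.cons h q, Walk.IsPath.nil, (Walk.cons_isPath_iff _ _).mpr hp,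
          hPv, ?_, ?_, ?_⟩
        · intro w hw
          rw [Walk.support_cons, List.tail_cons] at hw
          exact hq w hw
        · rw [walkWeight_nil]
          omega
        · intro w hw
          rw [Walk.support_nil, List.mem_singleton] at hw
          subst hw
          exact Walk.start_mem_support _
      · exact absurd hPv (hq v hv)


lemma restrict_reach_mem {S : Set V} {a b : V} (h : (sgRestrict G S).Reachable a b)
    (ha : a ∈ S) : b ∈ S := by
  obtain ⟨w⟩ := h
  induction w with
  | nil => exact ha
  | cons hadj q ih => exact ih hadj.2.2

lemma reach_of_all {S : Set V} (hall : ∀ v, v ∈ S) {a b : V} (h : G.Reachable a b) :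
    (sgRestrict G S).Reachable a b := by
  obtain ⟨w⟩ := h
  induction w with
  | nil => exact Reachable.refl _
  | cons hadj q ih => exact (restrict_adj_reach hadj (hall _) (hall _)).trans ih

/-- The main lemma: every vertex at distance at most 0 is reachable within `L(0)`. -/
lemma main_reach (hc : G.Connected) (hF : IsMinJoin G T F) (r : V)
    (hTreach : ∀ t ∈ T, (sgRestrict G {z | distF G F r z ≤ 0}).Reachable r t) :
    ∀ x, distF G F r x ≤ 0 → (sgRestrict G {z | distF G F r z ≤ 0}).Reachable r x := by
  intro x hx
  by_contra hbad
  obtain ⟨p, hp, hw⟩ := exists_min_path (F := F) hc r x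
  set Pr : V → Prop := fun v => ¬ (distF G F r v ≤ 0 ∧
    ¬ (sgRestrict G {z | distF G F r z ≤ 0}).Reachable r v) with hPrdef
  have hPrr : Pr r := fun hcon => hcon.2 (Reachable.refl r)
  have hPrx : ¬ Pr x := fun hcon => hcon ⟨hx, hbad⟩
  obtain ⟨z, q₁, q₂, hq₁, hq₂, hPz, htail, hwsum, _⟩ :=
    last_split (F := F) p hp ⟨r, p.start_mem_support, hPrr⟩ hPrx
  have hzbad : ∀ v ∈ q₂.support.tail, distF G F r v ≤ 0 ∧
      ¬ (sgRestrict G {z | distF G F r z ≤ 0}).Reachable r v := by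
    intro v hv
    have := htail v hv
    rw [hPrdef] at this
    exact not_not.mp this
  have hdz : 1 ≤ distF G F r z := by
    by_contra hlt0
    push_neg at hlt0
    have hlt : distF G F r z ≤ 0 := by omega
    have hreachz : (sgRestrict G {z | distF G F r z ≤ 0}).Reachable r z := by
      by_contra hnr
      exact hPz ⟨hlt, hnr⟩
    cases q₂ with
    | nil => exact hPrx hPz
    | @cons _ m _ hadj q₃ =>
      have hm : m ∈ (Walk.cons hadj q₃).support.tail := by
        rw [Walk.support_cons, List.tail_cons]
        exact Walk.start_mem_support q₃
      have hbm := hzbad m hm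
      exact hbm.2 (hreachz.trans
        (restrict_adj_reach hadj (by simpa using hlt) (by simpa using hbm.1)))
  have hwq1 : distF G F r z ≤ walkWeight F q₁ := distF_le_path q₁ hq₁
  have hwq2 : walkWeight F q₂ ≤ -1 := by omega
  obtain ⟨e, heq, heF⟩ := exists_F_edge (F := F) q₂ (by omega)
  obtain ⟨w1, hrep⟩ := Sym2.mem_iff_exists.mp (Sym2.out_fst_mem e)
  have hu1 : e.out.1 ∈ q₂.support := by
    apply Walk.fst_mem_support_of_mem_edges
    rw [← hrep]
    exact heq
  have hu2 : w1 ∈ q₂.support := by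
    apply Walk.snd_mem_support_of_mem_edges
    rw [← hrep]
    exact heq
  have hne : e.out.1 ≠ w1 := by
    intro hcon
    have hmem := hF.1.1 heF
    rw [hrep, hcon] at hmem
    exact (G.loopless.irrefl w1) ((G.mem_edgeSet).mp hmem)
  have hsupp := q₂.support_eq_cons
  rw [hsupp, List.mem_cons] at hu1 hu2
  rcases hu1 with h1 | h1 <;> rcases hu2 with h2 | h2
  · exact hne (h1.trans h2.symm)
  · -- e = s(z, w1), w1 bad: seed
    have hb2 := hzbad w1 h2
    have heF' : s(z, w1) ∈ F := by rw [← h1, ← hrep]; exact heF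
    exact no_seed hc hF hTreach heF' hdz hb2.1 hb2.2
  · -- e = s(e.out.1, z), e.out.1 bad: seed with swap
    have hb1 := hzbad e.out.1 h1
    have heF' : s(z, e.out.1) ∈ F := by
      rw [Sym2.eq_swap, ← h2, ← hrep]
      exact heF
    exact no_seed hc hF hTreach heF' hdz hb1.1 hb1.2
  · -- both endpoints bad: phase 2
    have hb1 := hzbad e.out.1 h1
    obtain ⟨t, htT, hreach⟩ := exists_T_reachable hF heF (Sym2.out_fst_mem e)
    obtain ⟨wlk⟩ := hreach
    exact phase2 hc hF hTreach wlk hb1.1 hb1.2 (hTreach t htT)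

lemma exists_minJoin (h : ∃ F : Set (Sym2 V), IsJoin G T F) :
    ∃ F : Set (Sym2 V), IsMinJoin G T F := by
  have hne : {n : ℕ | ∃ F : Set (Sym2 V), IsJoin G T F ∧ F.ncard = n}.Nonempty := by
    obtain ⟨F, hF⟩ := h
    exact ⟨F.ncard, F, hF, rfl⟩
  obtain ⟨F₀, hF₀, hcard⟩ := Nat.sInf_mem hne
  refine ⟨F₀, hF₀, ?_⟩
  intro F' hF'
  rw [hcard]
  exact Nat.sInf_le ⟨F', hF', rfl⟩


lemma graftDist_eq_distF (hc : G.Connected) (hF : IsMinJoin G T F) (x y : V) :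
    graftDist G T x y = distF G F x y := by
  have hset : {d : ℤ | ∃ F' : Set (Sym2 V), IsMinJoin G T F' ∧ distF G F' x y = d}
      = {distF G F x y} := by
    ext d
    simp only [Set.mem_setOf_eq, Set.mem_singleton_iff]
    constructor
    · rintro ⟨F', hF', rfl⟩
      exact distF_indep hF' hF hc x y
    · rintro rfl
      exact ⟨F, hF, rfl⟩
  rw [graftDist, hset, csInf_singleton]

lemma graftDist_empty (h : ¬ ∃ F' : Set (Sym2 V), IsMinJoin G T F') (x y : V) :
    graftDist G T x y = 0 := by
  have hset : {d : ℤ | ∃ F' : Set (Sym2 V), IsMinJoin G T F' ∧ distF G F' x y = d} = ∅ := by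
    ext d
    simp only [Set.mem_setOf_eq, Set.mem_empty_iff_false, iff_false]
    rintro ⟨F', hF', _⟩
    exact h ⟨F', hF'⟩
  rw [graftDist, hset, Int.csInf_empty]

end StmtAux

/-- let `(G, T)` be a connected graft with `T ≠ ∅`, `r ∈ V(G)`, and `K₀`
the connected component of `r` in the subgraph induced on `L(0) = {x : dist(r, x) ≤ 0}`.
If `T ⊆ K₀`, then the subgraph induced on `L(0)` is connected (hence equals `K₀`). -/
theorem stmt_18 (G : SimpleGraph V) (T : Set V) (hG : IsGraft G T) (hc : G.Connected)
    (hT : T.Nonempty) (r : V) (K₀ : Set V)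
    (hK₀ : K₀ = {u | (sgRestrict G {x | graftDist G T r x ≤ 0}).Reachable r u})
    (hTK : T ⊆ K₀) :
    (∀ x y : V, graftDist G T r x ≤ 0 → graftDist G T r y ≤ 0 →
      (sgRestrict G {z | graftDist G T r z ≤ 0}).Reachable x y) ∧
    K₀ = {x | graftDist G T r x ≤ 0} := by
  classical
  by_cases hex : ∃ F : Set (Sym2 V), IsJoin G T F
  · obtain ⟨F, hF⟩ := StmtAux.exists_minJoin hex
    have hgd : ∀ x, graftDist G T r x = distF G F r x :=
      fun x => StmtAux.graftDist_eq_distF hc hF r x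
    have hsets : {z : V | graftDist G T r z ≤ 0} = {z : V | distF G F r z ≤ 0} := by
      ext z
      simp only [Set.mem_setOf_eq, hgd z]
    have hTreach : ∀ t ∈ T, (sgRestrict G {z | distF G F r z ≤ 0}).Reachable r t := by
      intro t ht
      have h1 := hTK ht
      rw [hK₀, Set.mem_setOf_eq] at h1
      rwa [hsets] at h1
    have hmain := StmtAux.main_reach hc hF r hTreach
    have hrmem : distF G F r r ≤ 0 := le_of_eq (StmtAux.distF_self r)
    constructor
    · intro x y hx hy
      rw [hgd] at hx hy
      rw [hsets]
      exact (hmain x hx).symm.trans (hmain y hy)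
    · rw [hK₀]
      ext u
      simp only [Set.mem_setOf_eq]
      rw [hsets, hgd]
      constructor
      · intro hre
        exact StmtAux.restrict_reach_mem (S := {z : V | distF G F r z ≤ 0}) hre
          (show r ∈ {z : V | distF G F r z ≤ 0} from hrmem)
      · intro hu
        exact hmain u hu
  · have hnomin : ¬ ∃ F : Set (Sym2 V), IsMinJoin G T F := fun ⟨F, hF⟩ => hex ⟨F, hF.1⟩
    have hall : ∀ z, graftDist G T r z ≤ 0 := fun z =>
      le_of_eq (StmtAux.graftDist_empty hnomin r z)
    have hallm : ∀ z : V, z ∈ {z : V | graftDist G T r z ≤ 0} := hall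
    constructor
    · intro x y _ _
      exact (StmtAux.reach_of_all hallm (hc.preconnected r x)).symm.trans
        (StmtAux.reach_of_all hallm (hc.preconnected r y))
    · rw [hK₀]
      ext u
      simp only [Set.mem_setOf_eq]
      constructor
      · intro _
        exact hall u
      · intro _
        exact StmtAux.reach_of_all hallm (hc.preconnected r u)
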